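/- Let W ∈ ℝ^{n×n} be doubly stochastic with λ := ‖Wᴷ − J‖ < 1 for the averaging matrix J = (1/n)11ᵀ, and let h be proper, closed, convex, α > 0. If x ∈ ℝ^{np}, y ∈ ℝ^{np} are block vectors and x⁺ := (Wᴷ ⊗ I_p)·P(x − αy), where P applies prox_{αh} block-wise, then ‖x⁺ − Jx⁺‖² ≤ ((1+λ²)/2)·‖x − Jx‖² + (λ²α²(1+λ²)/(1−λ²))·‖y − Jy‖², where J also denotes the block averaging operator ((1/n)11ᵀ) ⊗ I_p. -/

import Mathlib

open scoped Matrix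

/-- `z` is the proximal point `prox_{αh}(c)`, i.e. the minimizer of
`u ↦ (1/2)‖u − c‖² + α h(u)`. -/
def IsProxPt {p : ℕ} (α : ℝ) (h : EuclideanSpace ℝ (Fin p) → EReal)
    (c z : EuclideanSpace ℝ (Fin p)) : Prop :=
  ∀ u : EuclideanSpace ℝ (Fin p),
    (((1 : ℝ) / 2 * ‖z - c‖ ^ 2 : ℝ) : EReal) + (α : EReal) * h z ≤
      (((1 : ℝ) / 2 * ‖u - c‖ ^ 2 : ℝ) : EReal) + (α : EReal) * h u


section Helpers

lemma euclid_norm_sq {p : ℕ} (w : EuclideanSpace ℝ (Fin p)) :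
    ‖w‖ ^ 2 = ∑ k, (w k) ^ 2 := by
  rw [EuclideanSpace.norm_eq, Real.sq_sqrt (by positivity)]
  simp [sq_abs]

lemma block_opnorm_bound {n p : ℕ} (M : Matrix (Fin n) (Fin n) ℝ)
    (v : Fin n → EuclideanSpace ℝ (Fin p)) :
    ∑ i, ‖∑ j, M i j • v j‖ ^ 2 ≤
      ‖Matrix.toEuclideanCLM (𝕜 := ℝ) M‖ ^ 2 * ∑ i, ‖v i‖ ^ 2 := by
  have happ : ∀ i k, (∑ j, M i j • v j) k = ∑ j, M i j * v j k := by
    intro i k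
    rw [WithLp.ofLp_sum, Finset.sum_apply]
    rfl
  calc ∑ i, ‖∑ j, M i j • v j‖ ^ 2
      = ∑ i, ∑ k, (∑ j, M i j * v j k) ^ 2 := by
        simp only [euclid_norm_sq, happ]
    _ = ∑ k, ∑ i, (∑ j, M i j * v j k) ^ 2 := Finset.sum_comm
    _ ≤ ∑ k : Fin p, ‖Matrix.toEuclideanCLM (𝕜 := ℝ) M‖ ^ 2 * ∑ i, (v i k) ^ 2 := by
        apply Finset.sum_le_sum
        intro k _
        set u : EuclideanSpace ℝ (Fin n) := (WithLp.equiv 2 _).symm (fun j => v j k) with hu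
        have h1 : ∑ i, (∑ j, M i j * v j k) ^ 2 = ‖Matrix.toEuclideanCLM (𝕜 := ℝ) M u‖ ^ 2 := by
          rw [euclid_norm_sq]
          rw [hu, WithLp.equiv_symm_apply, Matrix.toEuclideanCLM_toLp]
          simp [Matrix.toLin'_apply, Matrix.mulVec, dotProduct]
        have h2 : ‖u‖ ^ 2 = ∑ i, (v i k) ^ 2 := by
          rw [euclid_norm_sq]; rfl
        rw [h1, ← h2]
        have := (Matrix.toEuclideanCLM (𝕜 := ℝ) M).le_opNorm u
        calc ‖Matrix.toEuclideanCLM (𝕜 := ℝ) M u‖ ^ 2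
            ≤ (‖Matrix.toEuclideanCLM (𝕜 := ℝ) M‖ * ‖u‖) ^ 2 :=
              pow_le_pow_left₀ (norm_nonneg _) this 2
          _ = _ := by ring
    _ = ‖Matrix.toEuclideanCLM (𝕜 := ℝ) M‖ ^ 2 * ∑ i, ‖v i‖ ^ 2 := by
        rw [← Finset.mul_sum, Finset.sum_comm]
        simp only [euclid_norm_sq]

variable {E : Type*} [NormedAddCommGroup E] [InnerProductSpace ℝ E]

lemma variance_eq {n : ℕ} (hn : 0 < n) (v : Fin n → E) :
    ∑ i, ‖v i - (n : ℝ)⁻¹ • ∑ j, v j‖ ^ 2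
      = (∑ i, ‖v i‖ ^ 2) - (n : ℝ)⁻¹ * ‖∑ i, v i‖ ^ 2 := by
  have hn' : (n : ℝ) ≠ 0 := Nat.cast_ne_zero.2 hn.ne'
  have expand : ∀ i, ‖v i - (n : ℝ)⁻¹ • ∑ j, v j‖ ^ 2
      = ‖v i‖ ^ 2 - 2 * ((n:ℝ)⁻¹ * inner ℝ (v i) (∑ j, v j)) + ((n:ℝ)⁻¹)^2 * ‖∑ j, v j‖ ^ 2 := by
    intro i
    rw [norm_sub_sq_real, real_inner_smul_right, norm_smul]
    simp [abs_of_nonneg (by positivity : (0:ℝ) ≤ (n:ℝ)⁻¹), mul_pow]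
  simp only [expand]
  rw [Finset.sum_add_distrib, Finset.sum_sub_distrib]
  rw [← Finset.mul_sum, ← Finset.mul_sum, ← sum_inner, real_inner_self_eq_norm_sq]
  simp only [Finset.sum_const, Finset.card_univ, Fintype.card_fin, nsmul_eq_mul]
  field_simp
  ring

lemma pairwise_eq {n : ℕ} (v : Fin n → E) :
    ∑ i, ∑ j, ‖v i - v j‖ ^ 2
      = 2 * n * (∑ i, ‖v i‖ ^ 2) - 2 * ‖∑ i, v i‖ ^ 2 := by
  have expand : ∀ i j : Fin n, ‖v i - v j‖ ^ 2
      = ‖v i‖ ^ 2 + ‖v j‖ ^ 2 - 2 * inner ℝ (v i) (v j) := by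
    intro i j; rw [norm_sub_sq_real]; ring
  simp only [expand]
  rw [Finset.sum_comm (f := fun i j => ‖v i‖ ^ 2 + ‖v j‖ ^ 2 - 2 * (inner ℝ (v i) (v j) : ℝ))]
  simp only [Finset.sum_sub_distrib, Finset.sum_add_distrib, ← Finset.mul_sum, ← sum_inner,
    ← inner_sum, real_inner_self_eq_norm_sq, Finset.sum_const, Finset.card_univ,
    Fintype.card_fin, nsmul_eq_mul]
  ring_nf

lemma avg_nonexp {n : ℕ} (hn : 0 < n) (z c : Fin n → E)
    (hzc : ∀ i j, ‖z i - z j‖ ≤ ‖c i - c j‖) :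
    ∑ i, ‖z i - (n : ℝ)⁻¹ • ∑ j, z j‖ ^ 2 ≤ ∑ i, ‖c i - (n : ℝ)⁻¹ • ∑ j, c j‖ ^ 2 := by
  have hn' : (n : ℝ) ≠ 0 := Nat.cast_ne_zero.2 hn.ne'
  have hsum : ∑ i, ∑ j, ‖z i - z j‖ ^ 2 ≤ ∑ i, ∑ j, ‖c i - c j‖ ^ 2 := by
    apply Finset.sum_le_sum; intro i _; apply Finset.sum_le_sum; intro j _
    exact pow_le_pow_left₀ (norm_nonneg _) (hzc i j) 2
  have hz := variance_eq hn z
  have hc := variance_eq hn c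
  have hz2 := pairwise_eq z
  have hc2 := pairwise_eq c
  have hnpos : (0:ℝ) < n := by positivity
  rw [hz, hc]
  have e : ∀ S t : ℝ, (n:ℝ) * (S - (n:ℝ)⁻¹ * t) = n * S - t := by
    intro S t; field_simp
  have h1 : (n:ℝ) * ((∑ i, ‖z i‖ ^ 2) - (n:ℝ)⁻¹ * ‖∑ i, z i‖ ^ 2)
      ≤ (n:ℝ) * ((∑ i, ‖c i‖ ^ 2) - (n:ℝ)⁻¹ * ‖∑ i, c i‖ ^ 2) := by
    rw [e, e]; linarith
  exact le_of_mul_le_mul_left h1 hnpos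
lemma prox_val_ne_top {p : ℕ} {α : ℝ} (hα : 0 < α) {h : EuclideanSpace ℝ (Fin p) → EReal}
    (hproper : ∃ x, h x ≠ ⊤) (hnobot : ∀ x, h x ≠ ⊥)
    {c z : EuclideanSpace ℝ (Fin p)} (hz : IsProxPt α h c z) : h z ≠ ⊤ := by
  obtain ⟨u₀, hu₀⟩ := hproper
  intro htop
  have hle := hz u₀
  rw [htop, EReal.coe_mul_top_of_pos hα, EReal.add_top_of_ne_bot (EReal.coe_ne_bot _)] at hle
  have hu₀' : h u₀ = ((h u₀).toReal : EReal) := (EReal.coe_toReal hu₀ (hnobot u₀)).symm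
  rw [hu₀', ← EReal.coe_mul, ← EReal.coe_add] at hle
  exact EReal.coe_ne_top _ (top_le_iff.mp hle)

lemma prox_real_ineq {p : ℕ} {α : ℝ} (hα : 0 < α) {h : EuclideanSpace ℝ (Fin p) → EReal}
    (hproper : ∃ x, h x ≠ ⊤) (hnobot : ∀ x, h x ≠ ⊥)
    (hconv : ∀ x y : EuclideanSpace ℝ (Fin p), ∀ a b : ℝ, 0 ≤ a → 0 ≤ b → a + b = 1 →
      h (a • x + b • y) ≤ (a : EReal) * h x + (b : EReal) * h y)
    {c z : EuclideanSpace ℝ (Fin p)} (hz : IsProxPt α h c z)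
    (w : EuclideanSpace ℝ (Fin p)) (hw : h w ≠ ⊤)
    (t : ℝ) (ht : 0 < t) (ht1 : t ≤ 1) :
    α * ((h z).toReal - (h w).toReal) * t ≤
      t * inner ℝ (z - c) (w - z) + t ^ 2 / 2 * ‖w - z‖ ^ 2 := by
  set rz := (h z).toReal with hrz
  set rw' := (h w).toReal with hrw
  have hztop : h z ≠ ⊤ := prox_val_ne_top hα ⟨w, hw⟩ hnobot hz
  have hz' : h z = (rz : EReal) := (EReal.coe_toReal hztop (hnobot z)).symm
  have hw' : h w = (rw' : EReal) := (EReal.coe_toReal hw (hnobot w)).symm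
  set u := (1 - t) • z + t • w with hu
  have hcu : h u ≤ (((1 - t) * rz + t * rw' : ℝ) : EReal) := by
    have := hconv z w (1 - t) t (by linarith) ht.le (by ring)
    rw [hz', hw', ← EReal.coe_mul, ← EReal.coe_mul, ← EReal.coe_add] at this
    exact this
  have hutop : h u ≠ ⊤ := ne_top_of_le_ne_top (EReal.coe_ne_top _) hcu
  set su := (h u).toReal with hsu
  have hu' : h u = (su : EReal) := (EReal.coe_toReal hutop (hnobot u)).symm
  have hsule : su ≤ (1 - t) * rz + t * rw' := by
    rw [hu'] at hcu; exact EReal.coe_le_coe_iff.mp hcu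
  have main := hz u
  rw [hz', hu', ← EReal.coe_mul, ← EReal.coe_mul, ← EReal.coe_add, ← EReal.coe_add] at main
  have mainR : 1 / 2 * ‖z - c‖ ^ 2 + α * rz ≤ 1 / 2 * ‖u - c‖ ^ 2 + α * su :=
    EReal.coe_le_coe_iff.mp main
  have hueq : u - c = (z - c) + t • (w - z) := by rw [hu]; module
  have hnorm : ‖u - c‖ ^ 2
      = ‖z - c‖ ^ 2 + 2 * (t * inner ℝ (z - c) (w - z)) + t ^ 2 * ‖w - z‖ ^ 2 := by
    rw [hueq, norm_add_sq_real, real_inner_smul_right, norm_smul]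
    rw [Real.norm_eq_abs, abs_of_pos ht, mul_pow]
  nlinarith [mul_le_mul_of_nonneg_left hsule hα.le]

lemma prox_nonexp {p : ℕ} {α : ℝ} (hα : 0 < α) {h : EuclideanSpace ℝ (Fin p) → EReal}
    (hproper : ∃ x, h x ≠ ⊤) (hnobot : ∀ x, h x ≠ ⊥)
    (hconv : ∀ x y : EuclideanSpace ℝ (Fin p), ∀ a b : ℝ, 0 ≤ a → 0 ≤ b → a + b = 1 →
      h (a • x + b • y) ≤ (a : EReal) * h x + (b : EReal) * h y)
    {c₁ z₁ c₂ z₂ : EuclideanSpace ℝ (Fin p)}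
    (h1 : IsProxPt α h c₁ z₁) (h2 : IsProxPt α h c₂ z₂) :
    ‖z₁ - z₂‖ ≤ ‖c₁ - c₂‖ := by
  have h1top : h z₁ ≠ ⊤ := prox_val_ne_top hα hproper hnobot h1
  have h2top : h z₂ ≠ ⊤ := prox_val_ne_top hα hproper hnobot h2
  set d := z₂ - z₁ with hd
  have key : ∀ t : ℝ, 0 < t → t ≤ 1 → ‖d‖ ^ 2 ≤ inner ℝ (c₂ - c₁) d + t * ‖d‖ ^ 2 := by
    intro t ht ht1
    have A := prox_real_ineq hα hproper hnobot hconv h1 z₂ h2top t ht ht1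
    have B := prox_real_ineq hα hproper hnobot hconv h2 z₁ h1top t ht ht1
    have e1 : z₁ - z₂ = -d := by rw [hd]; module
    have e2 : ‖(-d : EuclideanSpace ℝ (Fin p))‖ = ‖d‖ := norm_neg d
    rw [e1, e2] at B
    have einner : (inner ℝ (z₁ - c₁) d : ℝ) + inner ℝ (z₂ - c₂) (-d)
        = -‖d‖ ^ 2 + inner ℝ (c₂ - c₁) d := by
      have e3 : z₁ - c₁ = -d + (c₂ - c₁) + (z₂ - c₂) := by rw [hd]; module
      rw [inner_neg_right, e3, inner_add_left, inner_add_left, inner_neg_left,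
        real_inner_self_eq_norm_sq]
      ring
    have hsum : 0 ≤ t * (-‖d‖ ^ 2 + inner ℝ (c₂ - c₁) d) + t ^ 2 * ‖d‖ ^ 2 := by nlinarith
    nlinarith
  have key2 : ‖d‖ ^ 2 ≤ inner ℝ (c₂ - c₁) d := by
    by_contra hlt
    push_neg at hlt
    set I : ℝ := inner ℝ (c₂ - c₁) d with hI
    set δ : ℝ := ‖d‖ ^ 2 - I with hδ
    have hδpos : 0 < δ := by rw [hδ]; linarith
    set t : ℝ := min 1 (δ / (2 * (‖d‖ ^ 2 + 1))) with htdef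
    have htpos : 0 < t := lt_min one_pos (by positivity)
    have ht1 : t ≤ 1 := min_le_left _ _
    have hk := key t htpos ht1
    have htle : t ≤ δ / (2 * (‖d‖ ^ 2 + 1)) := min_le_right _ _
    have htd : t * ‖d‖ ^ 2 ≤ δ / 2 := by
      have h0 : (0:ℝ) ≤ ‖d‖ ^ 2 := by positivity
      have := mul_le_mul_of_nonneg_right htle h0
      calc t * ‖d‖ ^ 2 ≤ δ / (2 * (‖d‖ ^ 2 + 1)) * ‖d‖ ^ 2 := this
        _ ≤ δ / 2 := by
          rw [div_mul_eq_mul_div, div_le_div_iff₀ (by positivity) (by norm_num)]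
          nlinarith
    linarith
  have key3 : ‖d‖ ^ 2 ≤ ‖c₂ - c₁‖ * ‖d‖ := le_trans key2 (real_inner_le_norm _ _)
  have : ‖d‖ ≤ ‖c₂ - c₁‖ := by nlinarith [norm_nonneg d, norm_nonneg (c₂ - c₁)]
  rw [← norm_neg d, ← norm_neg (c₂ - c₁)] at this
  have e4 : -d = z₁ - z₂ := by rw [hd]; module
  have e5 : -(c₂ - c₁) = c₁ - c₂ := by module
  rwa [e4, e5] at this

lemma pow_rowsum {n : ℕ} {W : Matrix (Fin n) (Fin n) ℝ}
    (hrow : W *ᵥ (fun _ => (1 : ℝ)) = fun _ => (1 : ℝ)) (K : ℕ) :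
    ∀ i, ∑ j, (W ^ K) i j = 1 := by
  induction K with
  | zero => intro i; simp [Matrix.one_apply]
  | succ K ih =>
    intro i
    have hW : ∀ i, ∑ j, W i j = 1 := by
      intro i
      have := congrFun hrow i
      simpa [Matrix.mulVec, dotProduct] using this
    rw [pow_succ']
    simp only [Matrix.mul_apply]
    rw [Finset.sum_comm]
    calc ∑ l, ∑ j, W i l * (W ^ K) l j = ∑ l, W i l * ∑ j, (W ^ K) l j := by
          simp_rw [Finset.mul_sum]
      _ = ∑ l, W i l := by simp [ih]
      _ = 1 := hW i

lemma pow_colsum {n : ℕ} {W : Matrix (Fin n) (Fin n) ℝ}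
    (hcol : (fun _ => (1 : ℝ)) ᵥ* W = fun _ => (1 : ℝ)) (K : ℕ) :
    ∀ j, ∑ i, (W ^ K) i j = 1 := by
  induction K with
  | zero => intro j; simp [Matrix.one_apply]
  | succ K ih =>
    intro j
    have hW : ∀ j, ∑ i, W i j = 1 := by
      intro j
      have := congrFun hcol j
      simpa [Matrix.vecMul, dotProduct] using this
    rw [pow_succ]
    simp only [Matrix.mul_apply]
    rw [Finset.sum_comm]
    calc ∑ l, ∑ i, (W ^ K) i l * W l j = ∑ l, (∑ i, (W ^ K) i l) * W l j := by
          simp_rw [Finset.sum_mul]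
      _ = ∑ l, W l j := by simp [ih]
      _ = 1 := hW j

lemma young_step {lam α : ℝ} (hlam0 : 0 ≤ lam) (hlam1 : lam < 1) (hα : 0 < α) {p : ℕ}
    (a b : EuclideanSpace ℝ (Fin p)) :
    lam ^ 2 * ‖a - α • b‖ ^ 2 ≤
      (1 + lam ^ 2) / 2 * ‖a‖ ^ 2 +
        lam ^ 2 * α ^ 2 * (1 + lam ^ 2) / (1 - lam ^ 2) * ‖b‖ ^ 2 := by
  have h1 : (0:ℝ) < 1 - lam ^ 2 := by nlinarith
  have hexp : ‖a - α • b‖ ^ 2 = ‖a‖ ^ 2 - 2 * (α * inner ℝ a b) + α ^ 2 * ‖b‖ ^ 2 := by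
    rw [norm_sub_sq_real, real_inner_smul_right, norm_smul, Real.norm_eq_abs, mul_pow, sq_abs]
  have hip : -(‖a‖ * ‖b‖) ≤ (inner ℝ a b : ℝ) := by
    have := abs_real_inner_le_norm a b
    have := neg_abs_le (inner ℝ a b : ℝ)
    linarith
  have prodnn : (0:ℝ) ≤ lam ^ 2 * (1 - lam ^ 2) * α * ((inner ℝ a b : ℝ) + ‖a‖ * ‖b‖) := by
    apply mul_nonneg
    · positivity
    · linarith
  have key' : lam ^ 2 * (1 - lam ^ 2) * ‖a - α • b‖ ^ 2 ≤
      (1 + lam ^ 2) / 2 * (1 - lam ^ 2) * ‖a‖ ^ 2 +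
        lam ^ 2 * α ^ 2 * (1 + lam ^ 2) * ‖b‖ ^ 2 := by
    rw [hexp]
    nlinarith [sq_nonneg ((1 - lam ^ 2) * ‖a‖ - 2 * lam ^ 2 * α * ‖b‖), prodnn]
  have h2 : lam ^ 2 * ‖a - α • b‖ ^ 2 ≤
      ((1 + lam ^ 2) / 2 * (1 - lam ^ 2) * ‖a‖ ^ 2 +
        lam ^ 2 * α ^ 2 * (1 + lam ^ 2) * ‖b‖ ^ 2) / (1 - lam ^ 2) := by
    rw [le_div_iff₀ h1]
    nlinarith [key']
  refine h2.trans (le_of_eq ?_)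
  field_simp

end Helpers

/-- One-step consensus contraction for the proximal gradient-tracking update
`x⁺ = (Wᴷ ⊗ I_p) · prox_{αh}(x − αy)` (applied block-wise), where
`λ := ‖Wᴷ − J‖ < 1` is the spectral norm of `Wᴷ − J`:
`‖x⁺ − Jx⁺‖² ≤ ((1+λ²)/2)‖x − Jx‖² + (λ²α²(1+λ²)/(1−λ²))‖y − Jy‖²`,
with block-vector norms expanded as sums of block norms. -/
theorem prox_consensus_contraction (n p K : ℕ) (hK : 1 ≤ K)
    (W : Matrix (Fin n) (Fin n) ℝ)
    (hnonneg : ∀ i j, 0 ≤ W i j)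
    (hrow : W *ᵥ (fun _ => (1 : ℝ)) = fun _ => (1 : ℝ))
    (hcol : (fun _ => (1 : ℝ)) ᵥ* W = fun _ => (1 : ℝ))
    (J : Matrix (Fin n) (Fin n) ℝ) (hJ : J = Matrix.of fun _ _ => (1 : ℝ) / n)
    (lam : ℝ) (hlam : lam = ‖Matrix.toEuclideanCLM (𝕜 := ℝ) (W ^ K - J)‖)
    (hlam1 : lam < 1)
    (h : EuclideanSpace ℝ (Fin p) → EReal)
    (hproper : ∃ x, h x ≠ ⊤) (hnobot : ∀ x, h x ≠ ⊥)
    (hclosed : LowerSemicontinuous h)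
    (hconv : ∀ x y : EuclideanSpace ℝ (Fin p), ∀ a b : ℝ, 0 ≤ a → 0 ≤ b → a + b = 1 →
      h (a • x + b • y) ≤ (a : EReal) * h x + (b : EReal) * h y)
    (α : ℝ) (hα : 0 < α)
    (x y prx xplus : Fin n → EuclideanSpace ℝ (Fin p))
    (hprx : ∀ i, IsProxPt α h (x i - α • y i) (prx i))
    (hxplus : ∀ i, xplus i = ∑ j, (W ^ K) i j • prx j)
    (xbar ybar xplusbar : EuclideanSpace ℝ (Fin p))
    (hxbar : xbar = (n : ℝ)⁻¹ • ∑ i, x i)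
    (hybar : ybar = (n : ℝ)⁻¹ • ∑ i, y i)
    (hxplusbar : xplusbar = (n : ℝ)⁻¹ • ∑ i, xplus i) :
    ∑ i, ‖xplus i - xplusbar‖ ^ 2 ≤
      (1 + lam ^ 2) / 2 * ∑ i, ‖x i - xbar‖ ^ 2 +
        lam ^ 2 * α ^ 2 * (1 + lam ^ 2) / (1 - lam ^ 2) * ∑ i, ‖y i - ybar‖ ^ 2 := by
  have hnonexp : ∀ i j, ‖prx i - prx j‖ ≤ ‖(x i - α • y i) - (x j - α • y j)‖ :=
    fun i j => prox_nonexp hα hproper hnobot hconv (hprx i) (hprx j)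
  have hlam0 : 0 ≤ lam := hlam ▸ norm_nonneg _
  rcases Nat.eq_zero_or_pos n with hn | hn0
  · subst hn
    simp
  have hn' : (n : ℝ) ≠ 0 := Nat.cast_ne_zero.2 hn0.ne'
  set zbar : EuclideanSpace ℝ (Fin p) := (n : ℝ)⁻¹ • ∑ j, prx j with hzbar
  have rowsum := pow_rowsum hrow K
  have colsum := pow_colsum hcol K
  have Jsum : ∀ i : Fin n, ∑ j, J i j = 1 := by
    intro i
    simp only [hJ, Matrix.of_apply, Finset.sum_const, Finset.card_univ, Fintype.card_fin,
      nsmul_eq_mul]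
    field_simp
  have hxpb : xplusbar = zbar := by
    rw [hxplusbar, hzbar]
    congr 1
    calc ∑ i, xplus i = ∑ i, ∑ j, (W ^ K) i j • prx j := by
          exact Finset.sum_congr rfl fun i _ => hxplus i
      _ = ∑ j, ∑ i, (W ^ K) i j • prx j := Finset.sum_comm
      _ = ∑ j, (∑ i, (W ^ K) i j) • prx j := by
          exact Finset.sum_congr rfl fun j _ => (Finset.sum_smul).symm
      _ = ∑ j, prx j := by
          exact Finset.sum_congr rfl fun j _ => by rw [colsum j, one_smul]
  have key1 : ∀ i, xplus i - xplusbar = ∑ j, (W ^ K - J) i j • (prx j - zbar) := by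
    intro i
    have hMrow : ∑ j, (W ^ K - J) i j = 0 := by
      simp only [Matrix.sub_apply, Finset.sum_sub_distrib, rowsum i, Jsum i, sub_self]
    have e1 : ∑ j, J i j • prx j = zbar := by
      rw [hzbar, Finset.smul_sum]
      exact Finset.sum_congr rfl fun j _ => by rw [hJ]; simp [one_div]
    have e2 : ∑ j, (W ^ K - J) i j • zbar = 0 := by
      rw [← Finset.sum_smul, hMrow, zero_smul]
    calc xplus i - xplusbar
        = (∑ j, (W ^ K) i j • prx j) - (∑ j, J i j • prx j)
            - ∑ j, (W ^ K - J) i j • zbar := by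
          rw [hxplus i, e1, e2, sub_zero, hxpb]
      _ = ∑ j, ((W ^ K) i j • prx j - J i j • prx j - (W ^ K - J) i j • zbar) := by
          rw [Finset.sum_sub_distrib, Finset.sum_sub_distrib]
      _ = ∑ j, (W ^ K - J) i j • (prx j - zbar) := by
          refine Finset.sum_congr rfl fun j _ => ?_
          rw [Matrix.sub_apply]
          module
  have hcbar : ∀ j, (x j - α • y j) - (n : ℝ)⁻¹ • ∑ i, (x i - α • y i)
      = (x j - xbar) - α • (y j - ybar) := by
    intro j
    have hsum : ∑ i, (x i - α • y i) = (∑ i, x i) - α • ∑ i, y i := by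
      rw [Finset.sum_sub_distrib, Finset.smul_sum]
    rw [hsum, hxbar, hybar]
    module
  calc ∑ i, ‖xplus i - xplusbar‖ ^ 2
      = ∑ i, ‖∑ j, (W ^ K - J) i j • (prx j - zbar)‖ ^ 2 := by
        exact Finset.sum_congr rfl fun i _ => by rw [key1 i]
    _ ≤ ‖Matrix.toEuclideanCLM (𝕜 := ℝ) (W ^ K - J)‖ ^ 2 * ∑ j, ‖prx j - zbar‖ ^ 2 :=
        block_opnorm_bound _ _
    _ = lam ^ 2 * ∑ j, ‖prx j - zbar‖ ^ 2 := by rw [hlam]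
    _ ≤ lam ^ 2 * ∑ j, ‖(x j - α • y j) - (n : ℝ)⁻¹ • ∑ i, (x i - α • y i)‖ ^ 2 := by
        apply mul_le_mul_of_nonneg_left _ (sq_nonneg lam)
        exact avg_nonexp hn0 prx (fun i => x i - α • y i) hnonexp
    _ = lam ^ 2 * ∑ j, ‖(x j - xbar) - α • (y j - ybar)‖ ^ 2 := by
        congr 1
        exact Finset.sum_congr rfl fun j _ => by rw [hcbar j]
    _ ≤ (1 + lam ^ 2) / 2 * ∑ i, ‖x i - xbar‖ ^ 2 +
        lam ^ 2 * α ^ 2 * (1 + lam ^ 2) / (1 - lam ^ 2) * ∑ i, ‖y i - ybar‖ ^ 2 := by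
        rw [Finset.mul_sum, Finset.mul_sum, Finset.mul_sum, ← Finset.sum_add_distrib]
        exact Finset.sum_le_sum fun j _ => young_step hlam0 hlam1 hα _ _
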